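/- Let D and D' be digraphs on n vertices. If |A(D)| + |A(D')| ≤ 2n − 2, then D and D' pack. -/

import Mathlib

open Finset

lemma card_perm_pair_le {n : ℕ} (a b x y : Fin n) (hab : a ≠ b) (hxy : x ≠ y) :
    (Finset.univ.filter (fun f : Equiv.Perm (Fin n) => f a = x ∧ f b = y)).card
      ≤ Nat.factorial (n - 2) := by
  classical
  set t1 : Equiv.Perm (Fin n) := Equiv.swap a x with ht1
  have ht1b : t1 b ≠ x := by
    intro hbx
    have ht1a : t1 a = x := Equiv.swap_apply_left a x
    exact hab (t1.injective (hbx.trans ht1a.symm)).symm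
  set t2 : Equiv.Perm (Fin n) := Equiv.swap (t1 b) y with ht2
  set σ : Equiv.Perm (Fin n) := t1.trans t2 with hσdef
  have hσa : σ a = x := by
    have : t1 a = x := Equiv.swap_apply_left a x
    simp only [hσdef, Equiv.trans_apply, this]
    exact Equiv.swap_apply_of_ne_of_ne (Ne.symm ht1b) hxy
  have hσb : σ b = y := by
    simp only [hσdef, Equiv.trans_apply]
    exact Equiv.swap_apply_left _ _
  -- the subtype of remaining vertices
  set p : Fin n → Prop := fun c => c ≠ a ∧ c ≠ b with hp
  have key : ∀ f : Equiv.Perm (Fin n), f a = x → f b = y →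
      ((f.trans σ.symm) a = a ∧ (f.trans σ.symm) b = b) := by
    intro f hfa hfb
    constructor
    · simp [Equiv.trans_apply, hfa, ← hσa]
    · simp [Equiv.trans_apply, hfb, ← hσb]
  have hcard2 : Fintype.card {c : Fin n // p c} = n - 2 := by
    rw [Fintype.card_subtype]
    have : (univ.filter p) = ({a, b} : Finset (Fin n))ᶜ := by
      ext c
      simp [hp, not_or]
    rw [this, Finset.card_compl, Finset.card_insert_of_notMem (by simp [hab]),
      Finset.card_singleton, Fintype.card_fin]
  -- injection
  have hinj : Fintype.card {f : Equiv.Perm (Fin n) // f a = x ∧ f b = y}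
      ≤ Fintype.card (Equiv.Perm {c : Fin n // p c}) := by
    let Φ : {f : Equiv.Perm (Fin n) // f a = x ∧ f b = y} →
        Equiv.Perm {c : Fin n // p c} := fun f =>
      Equiv.Perm.subtypePerm ((f : Equiv.Perm (Fin n)).trans σ.symm)
        (by
          intro c
          obtain ⟨ha, hb⟩ := key (f : Equiv.Perm (Fin n)) f.2.1 f.2.2
          set h := (f : Equiv.Perm (Fin n)).trans σ.symm
          constructor
          · rintro ⟨hca, hcb⟩
            exact ⟨fun e => hca (by rw [e, ha]), fun e => hcb (by rw [e, hb])⟩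
          · rintro ⟨hca, hcb⟩
            exact ⟨fun e => hca (h.injective (e.trans ha.symm)),
                   fun e => hcb (h.injective (e.trans hb.symm))⟩)
    apply Fintype.card_le_of_injective Φ
    intro f g hfg
    obtain ⟨hfa2, hfb2⟩ := key f f.2.1 f.2.2
    obtain ⟨hga2, hgb2⟩ := key g g.2.1 g.2.2
    have hall : ∀ c, ((f : Equiv.Perm (Fin n)).trans σ.symm) c
        = ((g : Equiv.Perm (Fin n)).trans σ.symm) c := by
      intro c
      by_cases hca : c = a
      · rw [hca, hfa2, hga2]
      · by_cases hcb : c = b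
        · rw [hcb, hfb2, hgb2]
        · have h2 : ((Φ f ⟨c, hca, hcb⟩ : {c : Fin n // p c}) : Fin n)
              = ((Φ g ⟨c, hca, hcb⟩ : {c : Fin n // p c}) : Fin n) := by rw [hfg]
          simpa only [Φ, Equiv.Perm.subtypePerm_apply] using h2
    apply Subtype.ext
    apply Equiv.ext
    intro c
    have := hall c
    simp only [Equiv.trans_apply] at this
    exact σ.symm.injective this
  calc (Finset.univ.filter (fun f : Equiv.Perm (Fin n) => f a = x ∧ f b = y)).card
      = Fintype.card {f : Equiv.Perm (Fin n) // f a = x ∧ f b = y} :=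
        (Fintype.card_subtype _).symm
    _ ≤ Fintype.card (Equiv.Perm {c : Fin n // p c}) := hinj
    _ = Nat.factorial (n - 2) := by rw [Fintype.card_perm, hcard2]


/-- A digraph on `Fin n` given by its finite arc set: arcs are ordered pairs
of distinct vertices (irreflexivity). -/
def IsDigraph {n : ℕ} (A : Finset (Fin n × Fin n)) : Prop :=
  ∀ p ∈ A, p.1 ≠ p.2

/-- Two digraphs on `n` vertices pack if there is a bijection of the vertex
sets sending every arc of the first to a non-arc of the second. -/
def Packs {n : ℕ} (A A' : Finset (Fin n × Fin n)) : Prop :=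
  ∃ f : Fin n ≃ Fin n, ∀ p ∈ A, (f p.1, f p.2) ∉ A'

/-- Two digraphs on `n` vertices with at most `2n - 2` arcs in total pack. -/
theorem packs_of_card_add_card_le (n : ℕ)
    (A A' : Finset (Fin n × Fin n)) (hA : IsDigraph A) (hA' : IsDigraph A')
    (h : A.card + A'.card ≤ 2 * n - 2) :
    Packs A A' := by
  classical
  by_cases hn : n ≤ 1
  · refine ⟨Equiv.refl _, fun p hp => ?_⟩
    have h1 := p.1.isLt
    have h2 := p.2.isLt
    exact absurd (Fin.ext (by omega)) (hA p hp)
  push_neg at hn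
  by_contra hP
  simp only [Packs, not_exists] at hP
  push_neg at hP
  have step1 : Fintype.card (Equiv.Perm (Fin n)) ≤
      ∑ f : Equiv.Perm (Fin n), (A.filter (fun p => (f p.1, f p.2) ∈ A')).card := by
    rw [← Finset.card_univ, Finset.card_eq_sum_ones]
    apply Finset.sum_le_sum
    intro f _
    obtain ⟨p, hp, hp'⟩ := hP f
    exact Finset.card_pos.mpr ⟨p, Finset.mem_filter.mpr ⟨hp, hp'⟩⟩
  have step2 : ∑ f : Equiv.Perm (Fin n), (A.filter (fun p => (f p.1, f p.2) ∈ A')).card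
      = ∑ p ∈ A, (Finset.univ.filter
          (fun f : Equiv.Perm (Fin n) => (f p.1, f p.2) ∈ A')).card := by
    simp only [Finset.card_filter]
    exact Finset.sum_comm
  have step3 : ∀ p ∈ A, (Finset.univ.filter
      (fun f : Equiv.Perm (Fin n) => (f p.1, f p.2) ∈ A')).card
        ≤ A'.card * Nat.factorial (n - 2) := by
    intro p hp
    have hsub : Finset.univ.filter (fun f : Equiv.Perm (Fin n) => (f p.1, f p.2) ∈ A')
        ⊆ A'.biUnion (fun q => Finset.univ.filter
            (fun f : Equiv.Perm (Fin n) => f p.1 = q.1 ∧ f p.2 = q.2)) := by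
      intro f hf
      simp only [Finset.mem_filter] at hf
      exact Finset.mem_biUnion.mpr ⟨(f p.1, f p.2), hf.2,
        Finset.mem_filter.mpr ⟨Finset.mem_univ _, rfl, rfl⟩⟩
    calc (Finset.univ.filter (fun f : Equiv.Perm (Fin n) => (f p.1, f p.2) ∈ A')).card
        ≤ (A'.biUnion (fun q => Finset.univ.filter
            (fun f : Equiv.Perm (Fin n) => f p.1 = q.1 ∧ f p.2 = q.2))).card :=
          Finset.card_le_card hsub
      _ ≤ ∑ q ∈ A', (Finset.univ.filter
            (fun f : Equiv.Perm (Fin n) => f p.1 = q.1 ∧ f p.2 = q.2)).card :=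
          Finset.card_biUnion_le
      _ ≤ ∑ _q ∈ A', Nat.factorial (n - 2) := by
          apply Finset.sum_le_sum
          intro q hq
          exact card_perm_pair_le p.1 p.2 q.1 q.2 (hA p hp) (hA' q hq)
      _ = A'.card * Nat.factorial (n - 2) := by
          rw [Finset.sum_const, smul_eq_mul]
  have main : Nat.factorial n ≤ A.card * (A'.card * Nat.factorial (n - 2)) := by
    have := le_trans step1 (le_of_eq step2)
    have := le_trans this (Finset.sum_le_sum step3)
    rw [Finset.sum_const, smul_eq_mul] at this
    calc Nat.factorial n = Fintype.card (Equiv.Perm (Fin n)) := by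
          rw [Fintype.card_perm, Fintype.card_fin]
      _ ≤ _ := this
  obtain ⟨k, rfl⟩ : ∃ k, n = k + 2 := ⟨n - 2, by omega⟩
  have hprod : A.card * A'.card ≤ (k + 1) * (k + 1) := by
    have h' : A.card + A'.card ≤ 2 * k + 2 := by omega
    have : (A.card : ℤ) * (A'.card : ℤ) ≤ ((k : ℤ) + 1) * ((k : ℤ) + 1) := by
      have h'' : (A.card : ℤ) + (A'.card : ℤ) ≤ 2 * (k : ℤ) + 2 := by exact_mod_cast h'
      nlinarith [sq_nonneg ((A.card : ℤ) - (A'.card : ℤ))]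
    exact_mod_cast this
  have hfac := Nat.factorial_pos k
  have hfin : (k + 2) * ((k + 1) * Nat.factorial k)
      ≤ ((k + 1) * (k + 1)) * Nat.factorial k := by
    calc (k + 2) * ((k + 1) * Nat.factorial k) = Nat.factorial (k + 2) := by
          rw [Nat.factorial_succ, Nat.factorial_succ]
      _ ≤ A.card * (A'.card * Nat.factorial (k + 2 - 2)) := main
      _ = (A.card * A'.card) * Nat.factorial k := by
          rw [Nat.add_sub_cancel, mul_assoc]
      _ ≤ ((k + 1) * (k + 1)) * Nat.factorial k :=
          Nat.mul_le_mul_right _ hprod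
  rw [← mul_assoc] at hfin
  have := Nat.le_of_mul_le_mul_right hfin hfac
  nlinarith
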